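/- A finite semigroup S is nilpotent (there exists k > 0 with S^k = {0}) if and only if it satisfies the equation x^ω y = y x^ω = x^ω for all x, y ∈ S. -/

import Mathlib

/-- `spow x n` is `x ^ n` for `n ≥ 1` (with the junk value `x` at `n = 0`). -/
def spow {S : Type*} [Mul S] (x : S) : ℕ → S
  | 0 => x
  | 1 => x
  | n + 2 => spow x (n + 1) * x

/-- `n` is the idempotent power of `x`: the least positive integer such that
`x ^ n` is idempotent. -/
def IsIdemPow {S : Type*} [Mul S] (x : S) (n : ℕ) : Prop :=
  0 < n ∧ spow x n * spow x n = spow x n ∧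
    ∀ m, 0 < m → spow x m * spow x m = spow x m → n ≤ m

section Aux

variable {S : Type*} [Semigroup S]

lemma spow_succ (x : S) (m : ℕ) (hm : 0 < m) : spow x (m + 1) = spow x m * x := by
  obtain ⟨k, rfl⟩ : ∃ k, m = k + 1 := ⟨m - 1, by omega⟩
  rfl

lemma spow_add (x : S) (m : ℕ) (hm : 0 < m) :
    ∀ n, 0 < n → spow x (m + n) = spow x m * spow x n := by
  intro n
  induction n with
  | zero => omega
  | succ k ih =>
    intro _
    rcases Nat.eq_zero_or_pos k with hk | hk
    · subst hk
      exact spow_succ x m hm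
    · have h1 : m + (k + 1) = (m + k) + 1 := by omega
      rw [h1, spow_succ x (m + k) (by omega), ih hk, spow_succ x k hk, mul_assoc]

lemma exists_idem_spow [Finite S] (x : S) :
    ∃ n, 0 < n ∧ spow x n * spow x n = spow x n := by
  have key : ∃ a b : ℕ, 0 < a ∧ a < b ∧ spow x a = spow x b := by
    obtain ⟨a, b, hab, hf⟩ :=
      Finite.exists_ne_map_eq_of_infinite (fun m : ℕ => spow x (m + 1))
    rcases Nat.lt_or_ge a b with h | h
    · exact ⟨a + 1, b + 1, Nat.succ_pos _, by omega, hf⟩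
    · exact ⟨b + 1, a + 1, Nat.succ_pos _, by omega, hf.symm⟩
  obtain ⟨a, b, ha0, hab, heq⟩ := key
  set p := b - a with hp
  have hp0 : 0 < p := by omega
  have step : ∀ m, a ≤ m → spow x (m + p) = spow x m := by
    intro m hm
    rcases Nat.eq_or_lt_of_le hm with h2 | hlt
    · rw [← h2]
      have h1 : a + p = b := by omega
      rw [h1, ← heq]
    · have h1 : m + p = b + (m - a) := by omega
      have h2 : m = a + (m - a) := by omega
      rw [h1, spow_add x b (by omega) (m - a) (by omega), ← heq,
        ← spow_add x a ha0 (m - a) (by omega), ← h2]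
  have iter : ∀ c m, a ≤ m → spow x (m + c * p) = spow x m := by
    intro c
    induction c with
    | zero => intro m _; simp
    | succ d ih =>
      intro m hm
      have h1 : m + (d + 1) * p = (m + d * p) + p := by ring
      rw [h1, step (m + d * p) (by omega), ih m hm]
  refine ⟨a * p, by positivity, ?_⟩
  have han : a ≤ a * p := Nat.le_mul_of_pos_right a hp0
  have h1 : spow x (a * p + a * p) = spow x (a * p) := iter a (a * p) han
  rw [← spow_add x (a * p) (by positivity) (a * p) (by positivity)] 
  exact h1

lemma foldl_shift (a b : S) (l : List S) :
    l.foldl (· * ·) (a * b) = a * l.foldl (· * ·) b := by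
  induction l generalizing b with
  | nil => rfl
  | cons c t ih =>
    show t.foldl (· * ·) (a * b * c) = a * t.foldl (· * ·) (b * c)
    rw [mul_assoc, ih]

lemma foldl_zero (z : S) (hz : ∀ a : S, z * a = z) :
    ∀ l : List S, l.foldl (· * ·) z = z := by
  intro l
  induction l with
  | nil => rfl
  | cons c t ih =>
    show t.foldl (· * ·) (z * c) = z
    rw [hz c, ih]

lemma foldl_replicate_idem (e : S) (he : e * e = e) :
    ∀ m, (List.replicate m e).foldl (· * ·) e = e := by
  intro m
  induction m with
  | zero => rfl
  | succ d ih =>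
    rw [List.replicate_succ]
    show (List.replicate d e).foldl (· * ·) (e * e) = e
    rw [he, ih]

lemma absorb_spow (x w : S) (h : x = x * w) :
    ∀ m, 0 < m → x = x * spow w m := by
  intro m
  induction m with
  | zero => omega
  | succ d ih =>
    intro _
    rcases Nat.eq_zero_or_pos d with hd | hd
    · subst hd; exact h
    · rw [spow_succ w d hd, ← mul_assoc, ← ih hd, ← h]

end Aux

/-- A finite semigroup with zero is nilpotent (some `S^k = {0}`) iff it
satisfies `x^ω y = y x^ω = x^ω` for all `x, y`. -/
theorem nilpotent_iff_equation {S : Type*} [Semigroup S] [Fintype S]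
    (z : S) (hz : ∀ x : S, z * x = z ∧ x * z = z) :
    (∃ k, 0 < k ∧ ∀ (x : S) (l : List S), l.length + 1 = k →
        l.foldl (· * ·) x = z) ↔
      (∀ (x y : S) (n : ℕ), IsIdemPow x n →
        spow x n * y = spow x n ∧ y * spow x n = spow x n) := by
  constructor
  · rintro ⟨k, hk0, hk⟩ x y n ⟨hn0, hidem, -⟩
    set e := spow x n with he
    have hez : e = z := by
      have := hk e (List.replicate (k - 1) e) (by simp; omega)
      rwa [foldl_replicate_idem e hidem] at this
    rw [hez]
    exact ⟨(hz y).1, (hz y).2⟩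
  · intro heq
    -- every idempotent equals z
    have idem_eq : ∀ e : S, e * e = e → e = z := by
      intro e he
      have hip : IsIdemPow e 1 := ⟨Nat.one_pos, by simpa [spow] using he, fun m hm _ => hm⟩
      have h1 : z * spow e 1 = spow e 1 := (heq e z 1 hip).2
      have h2 : z * e = e := by simpa [spow] using h1
      rw [← h2, (hz e).1]
    have spow_z : ∀ w : S, ∃ m, 0 < m ∧ spow w m = z := by
      intro w
      obtain ⟨m, hm0, hm⟩ := exists_idem_spow w
      exact ⟨m, hm0, idem_eq _ hm⟩
    refine ⟨Fintype.card S + 1, Nat.succ_pos _, ?_⟩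
    intro x l hl
    have hlen : l.length = Fintype.card S := by omega
    set g : Fin (Fintype.card S + 1) → S := fun i => (l.take i).foldl (· * ·) x with hg
    have main : ∀ i j : Fin (Fintype.card S + 1), (i : ℕ) < (j : ℕ) → g i = g j →
        l.foldl (· * ·) x = z := by
      intro i j hij hgij
      have hjle : (j : ℕ) ≤ l.length := by
        rw [hlen]; omega
      set s := (l.take (j : ℕ)).drop (i : ℕ) with hs
      have hslen : s.length = (j : ℕ) - i := by
        simp [hs, List.length_drop, List.length_take, Nat.min_eq_left hjle]
      have hsne : s ≠ [] := by
        intro hnil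
        rw [hnil] at hslen
        simp at hslen
        omega
      obtain ⟨hd, tl, hcons⟩ := List.exists_cons_of_ne_nil hsne
      have htake : l.take (i : ℕ) ++ s = l.take (j : ℕ) := by
        have h2 : l.take (i : ℕ) = (l.take (j : ℕ)).take (i : ℕ) := by
          rw [List.take_take, Nat.min_eq_left (le_of_lt hij)]
        rw [hs, h2, List.take_append_drop]
      set w := tl.foldl (· * ·) hd with hw
      have hgj : g j = g i * w := by
        have h1 : g j = s.foldl (· * ·) (g i) := by
          simp only [hg]
          rw [← htake, List.foldl_append]
        rw [h1, hcons]
        show tl.foldl (· * ·) (g i * hd) = g i * w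
        rw [foldl_shift]
      have habs : g i = g i * w := by rw [← hgj, hgij]
      obtain ⟨m, hm0, hmz⟩ := spow_z w
      have hgiz : g i = z := by
        calc g i = g i * spow w m := absorb_spow (g i) w habs m hm0
        _ = g i * z := by rw [hmz]
        _ = z := (hz (g i)).2
      calc l.foldl (· * ·) x
          = (l.take (j : ℕ) ++ l.drop (j : ℕ)).foldl (· * ·) x := by
            rw [List.take_append_drop]
        _ = (l.drop (j : ℕ)).foldl (· * ·) (g j) := List.foldl_append ..
        _ = (l.drop (j : ℕ)).foldl (· * ·) z := by rw [← hgij, hgiz]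
        _ = z := foldl_zero z (fun a => (hz a).1) _
    obtain ⟨i, j, hij, hgij⟩ := Fintype.exists_ne_map_eq_of_card_lt g (by simp)
    rcases lt_or_gt_of_ne (fun h => hij (Fin.ext h) : (i : ℕ) ≠ (j : ℕ)) with h | h
    · exact main i j h hgij
    · exact main j i h hgij.symm
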